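/- Let φ(x) = x + higher order terms be a formal power series in one variable over a field of characteristic zero, with order of φ(x) − x equal to d+1 ≥ 2. Then for each m ≥ 1, the order of Φ_m(x) = Σ_{k=0}^m (-1)^k C(m,k) φ^{∘k}(x) is at least m·d + 1. -/

import Mathlib

open PowerSeries

/-- Composition `f ∘ g` of formal power series in one variable (intended for `g` with zero
constant term): the coefficient of `X^d` only involves `(coeff k f)` for `k ≤ d`. -/
noncomputable def PowerSeries.compose {F : Type*} [CommRing F] (f g : PowerSeries F) :
    PowerSeries F :=
  PowerSeries.mk fun d => ∑ k ∈ Finset.range (d + 1), coeff k f * coeff d (g ^ k)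

/-- `k`-fold compositional iterate `φ^{∘k}`, with `φ^{∘0} = id = X`. -/
noncomputable def PowerSeries.iterComp {F : Type*} [CommRing F] (φ : PowerSeries F) :
    ℕ → PowerSeries F
  | 0 => PowerSeries.X
  | k + 1 => PowerSeries.compose (PowerSeries.iterComp φ k) φ

/-- `Φ_m = ∑_{k=0}^m (-1)^k C(m,k) φ^{∘k}`. -/
noncomputable def PowerSeries.Phi {F : Type*} [CommRing F] (φ : PowerSeries F) (m : ℕ) :
    PowerSeries F :=
  ∑ k ∈ Finset.range (m + 1), ((-1 : F) ^ k * (m.choose k : F)) • PowerSeries.iterComp φ k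

section Aux

variable {F : Type*} [CommRing F]

lemma compose_sum' {ι : Type*} (s : Finset ι) (f : ι → PowerSeries F) (g : PowerSeries F) :
    PowerSeries.compose (∑ i ∈ s, f i) g = ∑ i ∈ s, PowerSeries.compose (f i) g := by
  ext n
  simp only [PowerSeries.compose, coeff_mk, map_sum, Finset.sum_mul]
  rw [Finset.sum_comm]

lemma compose_smul' (c : F) (f g : PowerSeries F) :
    PowerSeries.compose (c • f) g = c • PowerSeries.compose f g := by
  ext n
  simp only [PowerSeries.compose, coeff_mk, map_smul, smul_eq_mul, Finset.mul_sum, mul_assoc]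

lemma Phi_succ (φ : PowerSeries F) (m : ℕ) :
    PowerSeries.Phi φ (m + 1) =
      PowerSeries.Phi φ m - PowerSeries.compose (PowerSeries.Phi φ m) φ := by
  unfold PowerSeries.Phi
  rw [compose_sum']
  simp only [compose_smul']
  have hI : ∀ k, PowerSeries.compose (PowerSeries.iterComp φ k) φ
      = PowerSeries.iterComp φ (k + 1) := fun k => rfl
  simp only [hI]
  set I := PowerSeries.iterComp φ with hIdef
  have hc : ∀ k, ((-1 : F) ^ (k+1) * ((m+1).choose (k+1) : F))
      = (-1 : F) ^ (k+1) * (m.choose (k+1) : F) - (-1 : F) ^ k * (m.choose k : F) := by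
    intro k
    rw [Nat.choose_succ_succ]
    push_cast
    ring
  rw [Finset.sum_range_succ' _ (m + 1)]
  simp only [hc, sub_smul, Finset.sum_sub_distrib]
  have h2 : ∑ k ∈ Finset.range (m + 1), ((-1 : F) ^ (k+1) * (m.choose (k+1) : F)) • I (k+1)
      + ((-1 : F) ^ 0 * ((m+1).choose 0 : F)) • I 0
      = ∑ k ∈ Finset.range (m + 1), ((-1 : F) ^ k * (m.choose k : F)) • I k := by
    rw [show (((m+1).choose 0 : ℕ) : F) = ((m.choose 0 : ℕ) : F) by simp]
    rw [← Finset.sum_range_succ' (fun k => ((-1 : F) ^ k * (m.choose k : F)) • I k) (m + 1)]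
    rw [Finset.sum_range_succ]
    simp
  rw [sub_add_eq_add_sub, h2]

end Aux

/-- if `φ(x) − x` has order `d + 1` with `d ≥ 1`, then for every `m ≥ 1`
the order of `Φ_m(x)` is at least `m·d + 1`. -/
theorem Phi_order_ge_strong {F : Type*} [Field F] [CharZero F] (φ : PowerSeries F)
    (h0 : constantCoeff φ = 0) (h1 : coeff 1 φ = 1) (d : ℕ) (hd : 1 ≤ d)
    (hord : (φ - PowerSeries.X).order = ((d : ℕ∞) + 1)) (m : ℕ) (hm : 1 ≤ m) :
    (m * d + 1 : ℕ∞) ≤ (PowerSeries.Phi φ m).order := by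
  -- φ - X is divisible by X^(d+1)
  have hXdvd : (PowerSeries.X : PowerSeries F) ^ (d + 1) ∣ (φ - PowerSeries.X) := by
    rw [PowerSeries.X_pow_dvd_iff]
    intro i hi
    apply PowerSeries.coeff_of_lt_order
    rw [hord]
    exact_mod_cast (by exact_mod_cast hi : (i : ℕ∞) < ((d : ℕ∞) + 1))
  obtain ⟨u, hu⟩ : (PowerSeries.X : PowerSeries F) ∣ φ := PowerSeries.X_dvd_iff.2 h0
  -- key: coeff n (φ^k - X^k) = 0 for n < k + d, k ≥ 1
  have key : ∀ k : ℕ, 1 ≤ k → ∀ n : ℕ, n < k + d →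
      coeff n (φ ^ k - PowerSeries.X ^ k) = 0 := by
    intro k hk n hn
    have hgeom : (∑ i ∈ Finset.range k, φ ^ i * PowerSeries.X ^ (k - 1 - i)) *
        (φ - PowerSeries.X) = φ ^ k - PowerSeries.X ^ k := geom_sum₂_mul φ PowerSeries.X k
    have hS : (PowerSeries.X : PowerSeries F) ^ (k - 1) ∣
        ∑ i ∈ Finset.range k, φ ^ i * PowerSeries.X ^ (k - 1 - i) := by
      apply Finset.dvd_sum
      intro i hi
      rw [Finset.mem_range] at hi
      refine ⟨u ^ i, ?_⟩
      have hpow : (PowerSeries.X : PowerSeries F) ^ (k - 1)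
          = PowerSeries.X ^ i * PowerSeries.X ^ (k - 1 - i) := by
        rw [← pow_add]
        congr 1
        omega
      rw [hu, mul_pow, hpow]
      ring
    have hdvd : (PowerSeries.X : PowerSeries F) ^ (k + d) ∣ (φ ^ k - PowerSeries.X ^ k) := by
      rw [← hgeom]
      have : k + d = (k - 1) + (d + 1) := by omega
      rw [this, pow_add]
      exact mul_dvd_mul hS hXdvd
    exact (PowerSeries.X_pow_dvd_iff.1 hdvd) n hn
  -- iterComp φ 1 = φ
  have hiter1 : PowerSeries.iterComp φ 1 = φ := by
    ext n
    show (coeff n) (PowerSeries.compose PowerSeries.X φ) = coeff n φ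
    rw [PowerSeries.compose, coeff_mk]
    rcases Nat.eq_zero_or_pos n with hn | hn
    · subst hn
      simp [h0]
    · have h1n : 1 ∈ Finset.range (n + 1) := by
        simp; omega
      rw [Finset.sum_eq_single 1]
      · simp
      · intro b _ hb
        simp [PowerSeries.coeff_X, hb]
      · intro h; exact absurd h1n h
  -- main claim
  have main : ∀ n : ℕ, 1 ≤ n → ∀ i : ℕ, i ≤ n * d → coeff i (PowerSeries.Phi φ n) = 0 := by
    intro n hn
    induction n, hn using Nat.le_induction with
    | base =>
      intro i hi
      have hiter0 : PowerSeries.iterComp φ 0 = PowerSeries.X := rfl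
      have hPhi1 : PowerSeries.Phi φ 1 = PowerSeries.X - φ := by
        rw [PowerSeries.Phi]
        rw [Finset.sum_range_succ, Finset.sum_range_succ, Finset.sum_range_zero]
        rw [hiter0, hiter1]
        simp [sub_eq_add_neg]
      have hc0 : coeff i (φ - PowerSeries.X) = 0 := by
        apply PowerSeries.coeff_of_lt_order
        rw [hord]
        have : i < d + 1 := by omega
        exact_mod_cast this
      rw [map_sub] at hc0
      rw [hPhi1, map_sub]
      linear_combination -hc0
    | succ n hn ih =>
      intro i hi
      rw [Phi_succ, map_sub]
      have hcomp : coeff i (PowerSeries.compose (PowerSeries.Phi φ n) φ)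
          = ∑ k ∈ Finset.range (i + 1), coeff k (PowerSeries.Phi φ n) * coeff i (φ ^ k) := by
        rw [PowerSeries.compose, coeff_mk]
      rw [hcomp]
      have hsum : ∑ k ∈ Finset.range (i + 1), coeff k (PowerSeries.Phi φ n) * coeff i (φ ^ k)
          = ∑ k ∈ Finset.range (i + 1),
              coeff k (PowerSeries.Phi φ n) * coeff i (PowerSeries.X ^ k) := by
        apply Finset.sum_congr rfl
        intro k hk
        by_cases hkle : k ≤ n * d
        · rw [ih k hkle]; ring
        · have hk1 : 1 ≤ k := Nat.one_le_iff_ne_zero.2 (by rintro rfl; exact hkle (Nat.zero_le _))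
          have hilt : i < k + d := by
            have h1 : (n + 1) * d = n * d + d := by ring
            omega
          have := key k hk1 i hilt
          rw [map_sub, sub_eq_zero] at this
          rw [this]
      rw [hsum]
      have hfinal : ∑ k ∈ Finset.range (i + 1),
          coeff k (PowerSeries.Phi φ n) * coeff i (PowerSeries.X ^ k)
          = coeff i (PowerSeries.Phi φ n) := by
        rw [Finset.sum_eq_single_of_mem i (Finset.self_mem_range_succ i)
          (fun b _ hb => by rw [PowerSeries.coeff_X_pow, if_neg (fun h => hb h.symm)]; ring)]
        simp [PowerSeries.coeff_X_pow]
      rw [hfinal, sub_self]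
  apply PowerSeries.le_order
  intro i hi
  have hi' : (i : ℕ∞) < ((m * d + 1 : ℕ) : ℕ∞) := by push_cast; exact hi
  exact main m hm i (Nat.lt_succ_iff.mp (Nat.cast_lt.mp hi'))
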